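/- For every 2-generic real X, the Turing jump X′ of X is not truth-table reducible to X ⊕ 0′ (the join of X with the halting problem). -/

import Mathlib

/-- `A` is truth-table reducible to `B`: there is a computable bound `f` and a total
computable evaluator `g` such that `A n` is determined by `B ↾ f n` via `g`. -/
def TTReducible (A B : ℕ → Bool) : Prop :=
  ∃ f : ℕ → ℕ, Computable f ∧ ∃ g : ℕ → List Bool → Bool, Computable₂ g ∧
    ∀ n, A n = g n ((List.range (f n)).map B)

/-- Truth-table equivalence. -/
def TTEquiv (A B : ℕ → Bool) : Prop := TTReducible A B ∧ TTReducible B A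

/-- The effective join `A ⊕ B`. -/
def ttJoin (A B : ℕ → Bool) : ℕ → Bool :=
  fun n => if n % 2 = 0 then A (n / 2) else B (n / 2)

/-- Codes for oracle (relative) partial recursive functions. -/
inductive OCode : Type
  | zero | succ | left | right | oracle
  | pair : OCode → OCode → OCode
  | comp : OCode → OCode → OCode
  | prec : OCode → OCode → OCode
  | rfind' : OCode → OCode

/-- Evaluation of an oracle code relative to an oracle `O : ℕ → Bool`. -/
def OCode.eval (O : ℕ → Bool) : OCode → ℕ →. ℕ
  | .zero => pure 0
  | .succ => fun n => Part.some (n + 1)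
  | .left => fun n : ℕ => Part.some n.unpair.1
  | .right => fun n : ℕ => Part.some n.unpair.2
  | .oracle => fun n => Part.some (cond (O n) 1 0)
  | .pair cf cg => fun n => Nat.pair <$> OCode.eval O cf n <*> OCode.eval O cg n
  | .comp cf cg => fun n => OCode.eval O cg n >>= OCode.eval O cf
  | .prec cf cg =>
    Nat.unpaired fun a n =>
      n.rec (OCode.eval O cf a) fun y IH => do
        let i ← IH
        OCode.eval O cg (Nat.pair a (Nat.pair y i))
  | .rfind' cf =>
    Nat.unpaired fun a m =>
      (Nat.rfind fun n => (fun m => m = 0) <$> OCode.eval O cf (Nat.pair a (n + m))).map (· + m)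

/-- A standard enumeration of the oracle codes. -/
def OCode.ofNat : ℕ → OCode
  | 0 => .zero
  | 1 => .succ
  | 2 => .left
  | 3 => .right
  | 4 => .oracle
  | n + 5 =>
    let m := n.div2.div2
    have hm : m < n + 5 := by
      simp only [m, Nat.div2_val]
      exact lt_of_le_of_lt (le_trans (Nat.div_le_self _ _) (Nat.div_le_self _ _))
        (by omega)
    have _m1 : m.unpair.1 < n + 5 := lt_of_le_of_lt m.unpair_left_le hm
    have _m2 : m.unpair.2 < n + 5 := lt_of_le_of_lt m.unpair_right_le hm
    match n.bodd, n.div2.bodd with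
    | false, false => .pair (OCode.ofNat m.unpair.1) (OCode.ofNat m.unpair.2)
    | false, true  => .comp (OCode.ofNat m.unpair.1) (OCode.ofNat m.unpair.2)
    | true , false => .prec (OCode.ofNat m.unpair.1) (OCode.ofNat m.unpair.2)
    | true , true  => .rfind' (OCode.ofNat m)
decreasing_by all_goals (simp only [m] at *; omega)

open Classical in
/-- The Turing jump `X′` of a real `X` : the halting problem relative to `X`. -/
noncomputable def ttJump (X : ℕ → Bool) : ℕ → Bool :=
  fun e => if ((OCode.ofNat e).eval X e).Dom then true else false

/-- The `n`-th iterated jump. -/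
noncomputable def ttJumpIter : ℕ → (ℕ → Bool) → (ℕ → Bool)
  | 0, X => X
  | n + 1, X => ttJump (ttJumpIter n X)

/-- The initial segment `X ↾ l` of a real, as a finite binary string. -/
def strPrefix (X : ℕ → Bool) (l : ℕ) : List Bool := (List.range l).map X

/-- `S` is a `Σ₂` set of strings. -/
def IsSigma2 (S : Set (List Bool)) : Prop :=
  ∃ R : List Bool → ℕ → ℕ → Bool,
    Computable (fun p : List Bool × ℕ × ℕ => R p.1 p.2.1 p.2.2) ∧
    ∀ σ, σ ∈ S ↔ ∃ a, ∀ b, R σ a b = true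

/-- `X` is 2-generic: for every `Σ₂` set `S` of strings, either some initial segment of `X`
is in `S`, or past some initial segment no extension is in `S`. -/
def TwoGeneric (X : ℕ → Bool) : Prop :=
  ∀ S : Set (List Bool), IsSigma2 S →
    (∃ l, strPrefix X l ∈ S) ∨ (∃ l, ∀ τ : List Bool, strPrefix X l <+: τ → τ ∉ S)

-- ===================== auxiliary development =====================
namespace TTAux

open Nat.Partrec (Code)

/-- Encoding of oracle codes, a right inverse of `OCode.ofNat`. -/
def enc : OCode → ℕ
  | .zero => 0
  | .succ => 1
  | .left => 2
  | .right => 3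
  | .oracle => 4
  | .pair a b => 4 * Nat.pair (enc a) (enc b) + 5
  | .comp a b => 4 * Nat.pair (enc a) (enc b) + 7
  | .prec a b => 4 * Nat.pair (enc a) (enc b) + 6
  | .rfind' a => 4 * enc a + 8

theorem ofNat_pair (M : ℕ) :
    OCode.ofNat (4*M+5) = .pair (OCode.ofNat M.unpair.1) (OCode.ofNat M.unpair.2) := by
  rw [show 4*M+5 = (4*M)+5 by ring, OCode.ofNat]
  have h1 : (4*M).bodd = false := by simp [Nat.bodd_mul]
  have h2 : (4*M).div2 = 2*M := by rw [Nat.div2_val]; omega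
  have h3 : (2*M).bodd = false := by simp [Nat.bodd_mul]
  have h4 : (2*M).div2 = M := by rw [Nat.div2_val]; omega
  simp only [h1, h2, h3, h4]

theorem ofNat_prec (M : ℕ) :
    OCode.ofNat (4*M+6) = .prec (OCode.ofNat M.unpair.1) (OCode.ofNat M.unpair.2) := by
  rw [show 4*M+6 = (4*M+1)+5 by ring, OCode.ofNat]
  have h1 : (4*M+1).bodd = true := by simp [Nat.bodd_add, Nat.bodd_mul]
  have h2 : (4*M+1).div2 = 2*M := by rw [Nat.div2_val]; omega
  have h3 : (2*M).bodd = false := by simp [Nat.bodd_mul]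
  have h4 : (2*M).div2 = M := by rw [Nat.div2_val]; omega
  simp only [h1, h2, h3, h4]

theorem ofNat_comp (M : ℕ) :
    OCode.ofNat (4*M+7) = .comp (OCode.ofNat M.unpair.1) (OCode.ofNat M.unpair.2) := by
  rw [show 4*M+7 = (4*M+2)+5 by ring, OCode.ofNat]
  have h1 : (4*M+2).bodd = false := by simp [Nat.bodd_add, Nat.bodd_mul]
  have h2 : (4*M+2).div2 = 2*M+1 := by rw [Nat.div2_val]; omega
  have h3 : (2*M+1).bodd = true := by simp [Nat.bodd_add, Nat.bodd_mul]
  have h4 : (2*M+1).div2 = M := by rw [Nat.div2_val]; omega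
  simp only [h1, h2, h3, h4]

theorem ofNat_rfind' (M : ℕ) :
    OCode.ofNat (4*M+8) = .rfind' (OCode.ofNat M) := by
  rw [show 4*M+8 = (4*M+3)+5 by ring, OCode.ofNat]
  have h1 : (4*M+3).bodd = true := by simp [Nat.bodd_add, Nat.bodd_mul]
  have h2 : (4*M+3).div2 = 2*M+1 := by rw [Nat.div2_val]; omega
  have h3 : (2*M+1).bodd = true := by simp [Nat.bodd_add, Nat.bodd_mul]
  have h4 : (2*M+1).div2 = M := by rw [Nat.div2_val]; omega
  simp only [h1, h2, h3, h4]

theorem ofNat_enc : ∀ c : OCode, OCode.ofNat (enc c) = c := by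
  intro c
  induction c with
  | zero => rw [enc, OCode.ofNat]
  | succ => rw [enc, OCode.ofNat]
  | left => rw [enc, OCode.ofNat]
  | right => rw [enc, OCode.ofNat]
  | oracle => rw [enc, OCode.ofNat]
  | pair a b iha ihb => rw [enc, ofNat_pair, Nat.unpair_pair]; rw [iha, ihb]
  | comp a b iha ihb => rw [enc, ofNat_comp, Nat.unpair_pair]; rw [iha, ihb]
  | prec a b iha ihb => rw [enc, ofNat_prec, Nat.unpair_pair]; rw [iha, ihb]
  | rfind' a iha => rw [enc, ofNat_rfind']; rw [iha]

/-- Embedding of plain codes into oracle codes. -/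
def emb : Code → OCode
  | .zero => .zero
  | .succ => .succ
  | .left => .left
  | .right => .right
  | .pair a b => .pair (emb a) (emb b)
  | .comp a b => .comp (emb a) (emb b)
  | .prec a b => .prec (emb a) (emb b)
  | .rfind' a => .rfind' (emb a)

theorem eval_emb (O : ℕ → Bool) : ∀ c : Code, OCode.eval O (emb c) = c.eval := by
  intro c
  induction c with
  | zero => rfl
  | succ => funext n; simp [emb, OCode.eval, Nat.Partrec.Code.eval]
  | left => funext n; simp [emb, OCode.eval, Nat.Partrec.Code.eval]
  | right => funext n; simp [emb, OCode.eval, Nat.Partrec.Code.eval]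
  | pair a b iha ihb => simp [emb, OCode.eval, Nat.Partrec.Code.eval, iha, ihb]; rfl
  | comp a b iha ihb => simp [emb, OCode.eval, Nat.Partrec.Code.eval, iha, ihb]; rfl
  | prec a b iha ihb => simp [emb, OCode.eval, Nat.Partrec.Code.eval, iha, ihb]; rfl
  | rfind' a iha => simp [emb, OCode.eval, Nat.Partrec.Code.eval, iha]; rfl

/-- Translation of oracle codes to plain codes, valid for the constant-false oracle. -/
def t0 : OCode → Code
  | .zero => .zero
  | .succ => .succ
  | .left => .left
  | .right => .right
  | .oracle => .zero
  | .pair a b => .pair (t0 a) (t0 b)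
  | .comp a b => .comp (t0 a) (t0 b)
  | .prec a b => .prec (t0 a) (t0 b)
  | .rfind' a => .rfind' (t0 a)

theorem eval_t0 : ∀ c : OCode, (t0 c).eval = OCode.eval (fun _ => false) c := by
  intro c
  induction c with
  | zero => rfl
  | succ => funext n; simp [t0, OCode.eval, Nat.Partrec.Code.eval]
  | left => funext n; simp [t0, OCode.eval, Nat.Partrec.Code.eval]
  | right => funext n; simp [t0, OCode.eval, Nat.Partrec.Code.eval]
  | oracle => funext n; simp [t0, OCode.eval, Nat.Partrec.Code.eval]; rfl
  | pair a b iha ihb => simp [t0, OCode.eval, Nat.Partrec.Code.eval, iha, ihb]; rfl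
  | comp a b iha ihb => simp [t0, OCode.eval, Nat.Partrec.Code.eval, iha, ihb]; rfl
  | prec a b iha ihb => simp [t0, OCode.eval, Nat.Partrec.Code.eval, iha, ihb]; rfl
  | rfind' a iha => simp [t0, OCode.eval, Nat.Partrec.Code.eval, iha]; rfl


/-- Numeric encoding of the plain code translating the `n`-th oracle code. -/
def F (n : ℕ) : ℕ := Nat.Partrec.Code.encodeCode (t0 (OCode.ofNat n))

def Gstep (l : List ℕ) : Option ℕ :=
  if l.length = 0 then some 0 else if l.length = 1 then some 1 else if l.length = 2 then some 2
  else if l.length = 3 then some 3 else if l.length = 4 then some 0 else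
  (if (l.length - 5) % 2 = 0 then
    (if ((l.length - 5) / 2) % 2 = 0 then
      some (2*(2*Nat.pair (l.getD ((l.length - 5)/2/2).unpair.1 0) (l.getD ((l.length - 5)/2/2).unpair.2 0))+4)
     else
      some (2*(2*Nat.pair (l.getD ((l.length - 5)/2/2).unpair.1 0) (l.getD ((l.length - 5)/2/2).unpair.2 0)+1)+4))
  else
    (if ((l.length - 5) / 2) % 2 = 0 then
      some (2*(2*Nat.pair (l.getD ((l.length - 5)/2/2).unpair.1 0) (l.getD ((l.length - 5)/2/2).unpair.2 0))+1+4)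
     else
      some (2*(2*(l.getD ((l.length - 5)/2/2) 0)+1)+1+4)))

theorem primrec_Gstep : Primrec Gstep := by
  have hlen : Primrec (fun l : List ℕ => l.length) := Primrec.list_length
  have hm : Primrec (fun l : List ℕ => (l.length - 5)/2/2) :=
    (Primrec.nat_div.comp (Primrec.nat_div.comp
      (Primrec.nat_sub.comp hlen (Primrec.const 5)) (Primrec.const 2)) (Primrec.const 2))
  have hi : Primrec (fun l : List ℕ => ((l.length - 5)/2/2).unpair.1) :=
    Primrec.fst.comp (Primrec.unpair.comp hm)
  have hj : Primrec (fun l : List ℕ => ((l.length - 5)/2/2).unpair.2) :=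
    Primrec.snd.comp (Primrec.unpair.comp hm)
  have ha : Primrec (fun l : List ℕ => l.getD ((l.length - 5)/2/2).unpair.1 0) :=
    (Primrec.list_getD 0).comp Primrec.id hi
  have hb : Primrec (fun l : List ℕ => l.getD ((l.length - 5)/2/2).unpair.2 0) :=
    (Primrec.list_getD 0).comp Primrec.id hj
  have hc : Primrec (fun l : List ℕ => l.getD ((l.length - 5)/2/2) 0) :=
    (Primrec.list_getD 0).comp Primrec.id hm
  have hpab : Primrec (fun l : List ℕ =>
      Nat.pair (l.getD ((l.length - 5)/2/2).unpair.1 0) (l.getD ((l.length - 5)/2/2).unpair.2 0)) :=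
    Primrec₂.natPair.comp ha hb
  have e0 : ∀ k : ℕ, PrimrecPred (fun l : List ℕ => l.length = k) := fun k =>
    Primrec.eq.comp hlen (Primrec.const k)
  have e1 : PrimrecPred (fun l : List ℕ => (l.length - 5) % 2 = 0) :=
    Primrec.eq.comp (Primrec.nat_mod.comp (Primrec.nat_sub.comp hlen (Primrec.const 5))
      (Primrec.const 2)) (Primrec.const 0)
  have e2 : PrimrecPred (fun l : List ℕ => ((l.length - 5)/2) % 2 = 0) :=
    Primrec.eq.comp (Primrec.nat_mod.comp (Primrec.nat_div.comp
      (Primrec.nat_sub.comp hlen (Primrec.const 5)) (Primrec.const 2))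
      (Primrec.const 2)) (Primrec.const 0)
  refine Primrec.ite (e0 0) (Primrec.const _) ?_
  refine Primrec.ite (e0 1) (Primrec.const _) ?_
  refine Primrec.ite (e0 2) (Primrec.const _) ?_
  refine Primrec.ite (e0 3) (Primrec.const _) ?_
  refine Primrec.ite (e0 4) (Primrec.const _) ?_
  refine Primrec.ite e1 (Primrec.ite e2 ?_ ?_) (Primrec.ite e2 ?_ ?_)
  · exact Primrec.option_some.comp (Primrec.nat_add.comp
      (Primrec.nat_mul.comp (Primrec.const 2) (Primrec.nat_mul.comp (Primrec.const 2) hpab))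
      (Primrec.const 4))
  · exact Primrec.option_some.comp (Primrec.nat_add.comp
      (Primrec.nat_mul.comp (Primrec.const 2)
        (Primrec.nat_add.comp (Primrec.nat_mul.comp (Primrec.const 2) hpab) (Primrec.const 1)))
      (Primrec.const 4))
  · exact Primrec.option_some.comp (Primrec.nat_add.comp (Primrec.nat_add.comp
      (Primrec.nat_mul.comp (Primrec.const 2) (Primrec.nat_mul.comp (Primrec.const 2) hpab))
      (Primrec.const 1)) (Primrec.const 4))
  · exact Primrec.option_some.comp (Primrec.nat_add.comp (Primrec.nat_add.comp
      (Primrec.nat_mul.comp (Primrec.const 2)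
        (Primrec.nat_add.comp (Primrec.nat_mul.comp (Primrec.const 2) hc) (Primrec.const 1)))
      (Primrec.const 1)) (Primrec.const 4))

theorem getD_range_map (F : ℕ → ℕ) {n i : ℕ} (h : i < n) :
    ((List.range n).map F).getD i 0 = F i := by
  simp [List.getD_eq_getElem?_getD, List.getElem?_map, List.getElem?_range h]

theorem Gstep_spec : ∀ n : ℕ, Gstep ((List.range n).map F) = some (F n) := by
  intro n
  match n with
  | 0 => rw [F, show OCode.ofNat 0 = OCode.zero by rw [OCode.ofNat]]; rfl
  | 1 => rw [F, show OCode.ofNat 1 = OCode.succ by rw [OCode.ofNat]]; rfl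
  | 2 => rw [F, show OCode.ofNat 2 = OCode.left by rw [OCode.ofNat]]; rfl
  | 3 => rw [F, show OCode.ofNat 3 = OCode.right by rw [OCode.ofNat]]; rfl
  | 4 => rw [F, show OCode.ofNat 4 = OCode.oracle by rw [OCode.ofNat]]; rfl
  | (n+5) =>
    have hlen : ((List.range (n+5)).map F).length = n + 5 := by simp
    have hm : n / 2 / 2 < n + 5 :=
      lt_of_le_of_lt (le_trans (Nat.div_le_self _ _) (Nat.div_le_self _ _)) (by omega)
    have hi : (n / 2 / 2).unpair.1 < n + 5 := lt_of_le_of_lt (Nat.unpair_left_le _) hm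
    have hj : (n / 2 / 2).unpair.2 < n + 5 := lt_of_le_of_lt (Nat.unpair_right_le _) hm
    have hdd : n.div2.div2 = n / 2 / 2 := by simp [Nat.div2_val]
    have hF : F (n+5) = Nat.Partrec.Code.encodeCode (t0 (OCode.ofNat (n+5))) := rfl
    rw [Gstep]
    simp only [hlen]
    rw [if_neg (by omega : ¬(n+5 = 0)), if_neg (by omega : ¬(n+5 = 1)),
        if_neg (by omega : ¬(n+5 = 2)), if_neg (by omega : ¬(n+5 = 3)),
        if_neg (by omega : ¬(n+5 = 4))]
    simp only [show (n+5)-5 = n by omega]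
    rw [getD_range_map F hi, getD_range_map F hj, getD_range_map F hm]
    rw [hF, OCode.ofNat]
    have h2 : n % 2 = n.bodd.toNat := Nat.mod_two_of_bodd n
    have h3 : n / 2 % 2 = n.div2.bodd.toNat := by
      rw [← Nat.div2_val]; exact Nat.mod_two_of_bodd n.div2
    rcases hb : n.bodd with _ | _ <;> rcases hd : n.div2.bodd with _ | _ <;>
      simp only [hb, hd, Bool.toNat_false, Bool.toNat_true] at h2 h3 <;>
      simp only [h2, h3, hdd, if_pos, if_neg, Nat.one_ne_zero, hb, hd] <;>
      simp [F, t0, Nat.Partrec.Code.encodeCode, hdd]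

theorem primrec_F : Primrec F := by
  have h : Primrec₂ (fun (_ : Unit) n => F n) :=
    Primrec.nat_strong_rec _ (primrec_Gstep.comp Primrec.snd).to₂
      (fun _ n => Gstep_spec n)
  exact h.comp (Primrec.const ()) Primrec.id


/-- The plain code equivalent (for the constant-false oracle) of the `n`-th oracle code. -/
def c2c (n : ℕ) : Code := Denumerable.ofNat Code (F n)

theorem c2c_eq (n : ℕ) : c2c n = t0 (OCode.ofNat n) := by
  have h : Encodable.encode (t0 (OCode.ofNat n)) = F n := by
    rw [F, Nat.Partrec.Code.encodeCode_eq]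
  rw [c2c, ← h, Denumerable.ofNat_encode]

theorem primrec_c2c : Primrec c2c := (Primrec.ofNat Code).comp primrec_F

/-- Stage-`s` approximation to the halting problem `0'`. -/
def Kap (s j : ℕ) : Bool := (Nat.Partrec.Code.evaln s (c2c j) j).isSome

theorem primrec_Kap : Primrec₂ Kap := by
  have h : Primrec (fun p : ℕ × ℕ => ((p.1, c2c p.2), p.2)) :=
    (Primrec.pair (Primrec.pair Primrec.fst (primrec_c2c.comp Primrec.snd)) Primrec.snd)
  exact (Primrec.option_isSome.comp (Nat.Partrec.Code.primrec_evaln.comp h)).to₂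

theorem eval_false_eq (j : ℕ) :
    (OCode.ofNat j).eval (fun _ => false) j = (c2c j).eval j := by
  rw [c2c_eq, eval_t0]

theorem K_iff (j : ℕ) :
    ttJump (fun _ => false) j = true ↔ ∃ s, Kap s j = true := by
  rw [ttJump]
  constructor
  · intro h
    by_cases hd : ((OCode.ofNat j).eval (fun _ => false) j).Dom
    · obtain ⟨x, hx⟩ := Part.dom_iff_mem.mp hd
      rw [eval_false_eq] at hx
      obtain ⟨s, hs⟩ := Nat.Partrec.Code.evaln_complete.mp hx
      exact ⟨s, by rw [Kap, Option.isSome_iff_exists]; exact ⟨x, hs⟩⟩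
    · simp [hd] at h
  · rintro ⟨s, hs⟩
    rw [Kap, Option.isSome_iff_exists] at hs
    obtain ⟨x, hx⟩ := hs
    have : x ∈ (c2c j).eval j := Nat.Partrec.Code.evaln_sound hx
    rw [← eval_false_eq] at this
    simp [Part.dom_iff_mem.mpr ⟨x, this⟩]

theorem Kap_mono {s t j : ℕ} (h : s ≤ t) (hs : Kap s j = true) : Kap t j = true := by
  rw [Kap, Option.isSome_iff_exists] at hs ⊢
  obtain ⟨x, hx⟩ := hs
  exact ⟨x, Nat.Partrec.Code.evaln_mono h hx⟩

theorem Kap_sound {s j : ℕ} (hs : Kap s j = true) : ttJump (fun _ => false) j = true :=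
  (K_iff j).mpr ⟨s, hs⟩

/-- There is an `honest` stage for any finite window. -/
theorem exists_honest (m : ℕ) :
    ∃ s, ∀ j, j < m → ttJump (fun _ => false) j = true → Kap s j = true := by
  induction m with
  | zero => exact ⟨0, fun j h => absurd h (Nat.not_lt_zero j)⟩
  | succ m ih =>
      obtain ⟨s₁, hs₁⟩ := ih
      by_cases hK : ttJump (fun _ => false) m = true
      · obtain ⟨s₂, hs₂⟩ := (K_iff m).mp hK
        refine ⟨max s₁ s₂, fun j hj hKj => ?_⟩
        rcases Nat.lt_succ_iff_lt_or_eq.mp hj with h | h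
        · exact Kap_mono (le_max_left _ _) (hs₁ j h hKj)
        · subst h; exact Kap_mono (le_max_right _ _) hs₂
      · refine ⟨s₁, fun j hj hKj => ?_⟩
        rcases Nat.lt_succ_iff_lt_or_eq.mp hj with h | h
        · exact hs₁ j h hKj
        · subst h; exact absurd hKj hK

theorem honest_eq {s m : ℕ}
    (h : ∀ j, j < m → ttJump (fun _ => false) j = true → Kap s j = true)
    {j : ℕ} (hj : j < m) : Kap s j = ttJump (fun _ => false) j := by
  rcases hK : ttJump (fun _ => false) j with _ | _
  · rcases hs : Kap s j with _ | _
    · rfl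
    · rw [Kap_sound hs] at hK; exact hK
  · exact h j hj hK


/-! ### The gate code: halts iff input is `1`. -/

def pG : ℕ →. ℕ := fun a => Nat.rfind (fun _ => Part.some (decide (a = 1)))

theorem partrec_pG : Nat.Partrec pG := by
  have hc : Computable₂ (fun (a : ℕ) (_ : ℕ) => (decide (a = 1) : Bool)) :=
    ((Primrec.eq.comp Primrec.fst (Primrec.const 1)).decide.to_comp).to₂
  have h : Partrec pG := Partrec.rfind hc.partrec₂
  exact Partrec.nat_iff.mp h

theorem pG_dom (a : ℕ) : (pG a).Dom ↔ a = 1 := by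
  constructor
  · intro h
    obtain ⟨n, hn, -⟩ := Nat.rfind_dom.mp h
    simpa using hn
  · intro h
    exact Nat.rfind_dom.mpr ⟨0, by simp [h], fun {m} hm => by simp⟩

theorem exists_gate : ∃ c : Code, c.eval = pG :=
  Nat.Partrec.Code.exists_code.mp partrec_pG

noncomputable def cG : Code := Classical.choose exists_gate

theorem cG_eval : cG.eval = pG := Classical.choose_spec exists_gate

/-! ### Probe machines. -/

/-- Oracle machine which runs `c` (computing a position), queries the oracle there,
and halts iff the oracle bit is `true`. -/
noncomputable def probe (c : Code) : OCode :=
  OCode.comp (emb cG) (OCode.comp OCode.oracle (emb c))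

theorem probe_spec (c : Code) (p : ℕ → ℕ) (hc : c.eval = fun z => Part.some (p z))
    (Y : ℕ → Bool) (z : ℕ) :
    (OCode.eval Y (probe c) z).Dom ↔ Y (p z) = true := by
  have h1 : OCode.eval Y (probe c) z
      = OCode.eval Y (OCode.comp OCode.oracle (emb c)) z >>= OCode.eval Y (emb cG) := rfl
  have h2 : OCode.eval Y (OCode.comp OCode.oracle (emb c)) z
      = OCode.eval Y (emb c) z >>= OCode.eval Y OCode.oracle := rfl
  rw [h1, h2, eval_emb, hc]
  simp only [Part.bind_eq_bind, Part.bind_some]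
  rw [show (Part.some (p z) >>= OCode.eval Y OCode.oracle) = Part.some (cond (Y (p z)) 1 0) from
    Part.bind_some _ _]
  rw [show (Part.some (cond (Y (p z)) 1 0) >>= OCode.eval Y (emb cG))
    = OCode.eval Y (emb cG) (cond (Y (p z)) 1 0) from Part.bind_some _ _]
  rw [eval_emb, cG_eval, pG_dom]
  cases hY : Y (p z) <;> simp


/-! ### Encodings of probe machines. -/

def E : ℕ → ℕ := fun k => Nat.rec 0 (fun _ ih => 4 * Nat.pair 1 ih + 7) k

theorem E_eq : ∀ k, E k = enc (emb (Code.const k))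
  | 0 => rfl
  | (k+1) => by
      show 4 * Nat.pair 1 (E k) + 7 = enc (emb (Code.comp Code.succ (Code.const k)))
      rw [E_eq k]; rfl

theorem primrec_E : Primrec E := by
  have h : Primrec₂ (fun (_ : Unit) (k : ℕ) => E k) := by
    refine (Primrec.nat_rec (Primrec.const 0)
      ((Primrec.nat_add.comp
        (Primrec.nat_mul.comp (Primrec.const 4)
          (Primrec₂.natPair.comp (Primrec.const 1) (Primrec.snd.comp Primrec.snd)))
        (Primrec.const 7)).to₂)).of_eq ?_
    intro _ k
    rfl
  exact h.comp (Primrec.const ()) Primrec.id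

/-- Numeric index of the probe machine with position code
`Code.comp cA (Code.pair cf (Code.const k))`. -/
def idx (A B Cf : ℕ) (k : ℕ) : ℕ :=
  4 * Nat.pair A (4 * Nat.pair 4 (4 * Nat.pair B (4 * Nat.pair Cf (E k) + 5) + 7) + 7) + 7

theorem idx_eq (cA cf : Code) (k : ℕ) :
    idx (enc (emb cG)) (enc (emb cA)) (enc (emb cf)) k
      = enc (probe (Code.comp cA (Code.pair cf (Code.const k)))) := by
  simp [idx, probe, emb, enc, E_eq]

theorem primrec_idx (A B Cf : ℕ) : Primrec (idx A B Cf) := by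
  unfold idx
  exact Primrec.nat_add.comp
    (Primrec.nat_mul.comp (Primrec.const 4)
      (Primrec₂.natPair.comp (Primrec.const A)
        (Primrec.nat_add.comp
          (Primrec.nat_mul.comp (Primrec.const 4)
            (Primrec₂.natPair.comp (Primrec.const 4)
              (Primrec.nat_add.comp
                (Primrec.nat_mul.comp (Primrec.const 4)
                  (Primrec₂.natPair.comp (Primrec.const B)
                    (Primrec.nat_add.comp
                      (Primrec.nat_mul.comp (Primrec.const 4)
                        (Primrec₂.natPair.comp (Primrec.const Cf) primrec_E))
                      (Primrec.const 5))))
                (Primrec.const 7))))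
          (Primrec.const 7))))
    (Primrec.const 7)

/-! ### Finite joins. -/

def joinL (σ : List Bool) (T : ℕ → Bool) (m : ℕ) : List Bool :=
  (List.range m).map (fun i => if i % 2 = 0 then σ.getD (i/2) false else T (i/2))

theorem strPrefix_length (X : ℕ → Bool) (l : ℕ) : (strPrefix X l).length = l := by
  simp [strPrefix]

theorem strPrefix_getD (X : ℕ → Bool) {l j : ℕ} (h : j < l) :
    (strPrefix X l).getD j false = X j := by
  simp [strPrefix, List.getD_eq_getElem?_getD, List.getElem?_map, List.getElem?_range h]

theorem joinL_eq_window (X T : ℕ → Bool) {l m : ℕ} (h : m ≤ 2*l) :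
    (List.range m).map (ttJoin X T) = joinL (strPrefix X l) T m := by
  unfold joinL
  apply List.map_congr_left
  intro i hi
  have hi' : i < m := List.mem_range.mp hi
  rw [ttJoin]
  by_cases he : i % 2 = 0
  · rw [if_pos he, if_pos he, strPrefix_getD X (by omega)]
  · rw [if_neg he, if_neg he]

theorem joinL_congr {σ₁ σ₂ : List Bool} (T : ℕ → Bool) (m : ℕ)
    (h : ∀ j, 2*j < m → σ₁.getD j false = σ₂.getD j false) :
    joinL σ₁ T m = joinL σ₂ T m := by
  unfold joinL
  apply List.map_congr_left
  intro i hi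
  have hi' : i < m := List.mem_range.mp hi
  by_cases he : i % 2 = 0
  · rw [if_pos he, if_pos he, h (i/2) (by omega)]
  · rw [if_neg he, if_neg he]

theorem joinL_T_congr (σ : List Bool) {T₁ T₂ : ℕ → Bool} (m : ℕ)
    (h : ∀ j, j < m → T₁ j = T₂ j) :
    joinL σ T₁ m = joinL σ T₂ m := by
  unfold joinL
  apply List.map_congr_left
  intro i hi
  have hi' : i < m := List.mem_range.mp hi
  by_cases he : i % 2 = 0
  · rw [if_pos he, if_pos he]
  · rw [if_neg he, if_neg he, h (i/2) (by omega)]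

theorem primrec_joinL_Kap :
    Primrec (fun q : List Bool × ℕ × ℕ => joinL q.1 (Kap q.2.1) q.2.2) := by
  have hc : PrimrecPred (fun q : (List Bool × ℕ × ℕ) × ℕ => q.2 % 2 = 0) :=
    Primrec.eq.comp (Primrec.nat_mod.comp Primrec.snd (Primrec.const 2)) (Primrec.const 0)
  have hg0 : Primrec (fun q : (List Bool × ℕ × ℕ) × ℕ =>
      if q.2 % 2 = 0 then q.1.1.getD (q.2/2) false else Kap q.1.2.1 (q.2/2)) := by
    refine Primrec.ite hc ?_ ?_
    · exact (Primrec.list_getD false).comp (Primrec.fst.comp Primrec.fst)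
        (Primrec.nat_div.comp Primrec.snd (Primrec.const 2))
    · exact primrec_Kap.comp (Primrec.fst.comp (Primrec.snd.comp Primrec.fst))
        (Primrec.nat_div.comp Primrec.snd (Primrec.const 2))
  have hg : Primrec₂ (fun (q : List Bool × ℕ × ℕ) (i : ℕ) =>
      if i % 2 = 0 then q.1.getD (i/2) false else Kap q.2.1 (i/2)) := hg0.to₂
  have hf : Primrec (fun q : List Bool × ℕ × ℕ => List.range q.2.2) :=
    Primrec.list_range.comp (Primrec.snd.comp Primrec.snd)
  exact (Primrec.list_map hf hg).of_eq (fun q => rfl)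


/-! ### The Σ₂ relation used in the main proof. -/

def Rrel (f : ℕ → ℕ) (g : ℕ → List Bool → Bool) (N : ℕ → ℕ) :
    List Bool → ℕ → ℕ → Bool :=
  fun σ a b =>
    (decide (1 ≤ a.unpair.1) &&
     decide (f (N a.unpair.1) ≤ 2 * σ.length) &&
     decide (f (N a.unpair.1) + a.unpair.1 < σ.length) &&
     (!(decide (b.unpair.1 < f (N a.unpair.1)) && Kap b.unpair.2 b.unpair.1
         && !(Kap a.unpair.2 b.unpair.1))) &&
     (σ.getD (f (N a.unpair.1) + a.unpair.1) false
        != g (N a.unpair.1) (joinL σ (Kap a.unpair.2) (f (N a.unpair.1)))))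

set_option maxHeartbeats 1000000 in
theorem computable_Rrel {f : ℕ → ℕ} {g : ℕ → List Bool → Bool} {N : ℕ → ℕ}
    (hf : Computable f) (hg : Computable₂ g) (hN : Primrec N) :
    Computable fun p : List Bool × ℕ × ℕ => Rrel f g N p.1 p.2.1 p.2.2 := by
  unfold Rrel
  have hσ : Computable fun p : List Bool × ℕ × ℕ => p.1 := Computable.fst
  have hσp : Primrec fun p : List Bool × ℕ × ℕ => p.1 := Primrec.fst
  have hkp : Primrec fun p : List Bool × ℕ × ℕ => p.2.1.unpair.1 :=
    Primrec.fst.comp (Primrec.unpair.comp (Primrec.fst.comp Primrec.snd))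
  have hsp : Primrec fun p : List Bool × ℕ × ℕ => p.2.1.unpair.2 :=
    Primrec.snd.comp (Primrec.unpair.comp (Primrec.fst.comp Primrec.snd))
  have hjp : Primrec fun p : List Bool × ℕ × ℕ => p.2.2.unpair.1 :=
    Primrec.fst.comp (Primrec.unpair.comp (Primrec.snd.comp Primrec.snd))
  have htp : Primrec fun p : List Bool × ℕ × ℕ => p.2.2.unpair.2 :=
    Primrec.snd.comp (Primrec.unpair.comp (Primrec.snd.comp Primrec.snd))
  have hm : Computable fun p : List Bool × ℕ × ℕ => f (N p.2.1.unpair.1) :=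
    hf.comp ((hN.comp hkp).to_comp)
  have hand : Computable₂ fun (x y : Bool) => x && y := (Primrec.dom_bool₂ _).to_comp
  have hbne : Computable₂ fun (x y : Bool) => x != y := (Primrec.dom_bool₂ _).to_comp
  have hnot : Computable fun (x : Bool) => !x := (Primrec.dom_bool _).to_comp
  have hc1 : Computable fun p : List Bool × ℕ × ℕ => decide (1 ≤ p.2.1.unpair.1) :=
    (Primrec.nat_le.comp (Primrec.const 1) hkp).decide.to_comp
  have hc2 : Computable fun p : List Bool × ℕ × ℕ =>
      decide (f (N p.2.1.unpair.1) ≤ 2 * p.1.length) :=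
    Primrec.nat_le.decide.to_comp.comp hm
      ((Primrec.nat_mul.comp (Primrec.const 2) (Primrec.list_length.comp hσp)).to_comp)
  have hmk : Computable fun p : List Bool × ℕ × ℕ => f (N p.2.1.unpair.1) + p.2.1.unpair.1 :=
    Primrec.nat_add.to_comp.comp hm hkp.to_comp
  have hc3 : Computable fun p : List Bool × ℕ × ℕ =>
      decide (f (N p.2.1.unpair.1) + p.2.1.unpair.1 < p.1.length) :=
    Primrec.nat_lt.decide.to_comp.comp hmk (Primrec.list_length.comp hσp).to_comp
  have hc4 : Computable fun p : List Bool × ℕ × ℕ =>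
      !(decide (p.2.2.unpair.1 < f (N p.2.1.unpair.1)) && Kap p.2.2.unpair.2 p.2.2.unpair.1
          && !(Kap p.2.1.unpair.2 p.2.2.unpair.1)) := by
    have d1 : Computable fun p : List Bool × ℕ × ℕ =>
        decide (p.2.2.unpair.1 < f (N p.2.1.unpair.1)) :=
      Primrec.nat_lt.decide.to_comp.comp hjp.to_comp hm
    have d2 : Computable fun p : List Bool × ℕ × ℕ => Kap p.2.2.unpair.2 p.2.2.unpair.1 :=
      (primrec_Kap.comp htp hjp).to_comp
    have d3 : Computable fun p : List Bool × ℕ × ℕ => !(Kap p.2.1.unpair.2 p.2.2.unpair.1) :=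
      hnot.comp ((primrec_Kap.comp hsp hjp).to_comp)
    exact hnot.comp (hand.comp (hand.comp d1 d2) d3)
  have hc5 : Computable fun p : List Bool × ℕ × ℕ =>
      (p.1.getD (f (N p.2.1.unpair.1) + p.2.1.unpair.1) false
        != g (N p.2.1.unpair.1) (joinL p.1 (Kap p.2.1.unpair.2) (f (N p.2.1.unpair.1)))) := by
    have hx : Computable fun p : List Bool × ℕ × ℕ =>
        p.1.getD (f (N p.2.1.unpair.1) + p.2.1.unpair.1) false :=
      (Primrec.list_getD false).to_comp.comp hσ hmk
    have hy : Computable fun p : List Bool × ℕ × ℕ =>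
        g (N p.2.1.unpair.1) (joinL p.1 (Kap p.2.1.unpair.2) (f (N p.2.1.unpair.1))) :=
      hg.comp ((hN.comp hkp).to_comp)
        (primrec_joinL_Kap.to_comp.comp (hσ.pair (hsp.to_comp.pair hm)))
    exact hbne.comp hx hy
  exact hand.comp (hand.comp (hand.comp (hand.comp hc1 hc2) hc3) hc4) hc5

theorem Rrel_iff (f : ℕ → ℕ) (g : ℕ → List Bool → Bool) (N : ℕ → ℕ)
    (σ : List Bool) (k s : ℕ) :
    (∀ b, Rrel f g N σ (Nat.pair k s) b = true) ↔
      (1 ≤ k ∧ f (N k) ≤ 2*σ.length ∧ f (N k) + k < σ.length ∧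
       (∀ j t, j < f (N k) → Kap t j = true → Kap s j = true) ∧
       σ.getD (f (N k) + k) false ≠ g (N k) (joinL σ (Kap s) (f (N k)))) := by
  unfold Rrel
  simp only [Nat.unpair_pair]
  constructor
  · intro h
    have h0 := h 0
    simp only [Bool.and_eq_true, decide_eq_true_eq, bne_iff_ne] at h0
    refine ⟨h0.1.1.1.1, h0.1.1.1.2, h0.1.1.2, ?_, h0.2⟩
    intro j t hj hKt
    have hb := h (Nat.pair j t)
    simp only [Nat.unpair_pair, Bool.and_eq_true] at hb
    have hnotc : (!(decide (j < f (N k)) && Kap t j && !(Kap s j))) = true := hb.1.2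
    by_contra hKs
    have hKs' : Kap s j = false := Bool.eq_false_iff.mpr hKs
    simp [hj, hKt, hKs'] at hnotc
  · rintro ⟨h1, h2, h3, h4, h5⟩ b
    have hc4 : (!(decide (b.unpair.1 < f (N k)) && Kap b.unpair.2 b.unpair.1
        && !(Kap s b.unpair.1))) = true := by
      by_cases hj : b.unpair.1 < f (N k)
      · by_cases hKt : Kap b.unpair.2 b.unpair.1 = true
        · simp [hj, hKt, h4 _ _ hj hKt]
        · simp [hj, Bool.eq_false_iff.mpr hKt]
      · simp [hj]
    simp only [Bool.and_eq_true, decide_eq_true_eq, bne_iff_ne]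
    exact ⟨⟨⟨⟨h1, h2⟩, h3⟩, hc4⟩, h5⟩

end TTAux

open Nat.Partrec (Code)

open TTAux in
/-- For every 2-generic real `X`, the jump `X′` is not truth-table reducible to `X ⊕ 0′`. -/
theorem jump_not_tt_reducible_to_join_of_twoGeneric (X : ℕ → Bool) (hX : TwoGeneric X) :
    ¬ TTReducible (ttJump X) (ttJoin X (ttJump fun _ => false)) := by
  rintro ⟨f, hf, g, hg, hred⟩
  -- a plain code for `f`
  obtain ⟨cf, hcf⟩ := Nat.Partrec.Code.exists_code.mp (Partrec.nat_iff.mp hf)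
  -- a plain code for unpaired addition
  have haddc : Computable fun n : ℕ => n.unpair.1 + n.unpair.2 :=
    (Primrec.nat_add.comp (Primrec.fst.comp Primrec.unpair)
      (Primrec.snd.comp Primrec.unpair)).to_comp
  obtain ⟨cA, hcA⟩ := Nat.Partrec.Code.exists_code.mp (Partrec.nat_iff.mp haddc)
  have body_eval : ∀ k z, (Code.comp cA (Code.pair cf (Code.const k))).eval z
      = Part.some (f z + k) := by
    intro k z
    have h1 : (Code.pair cf (Code.const k)).eval z = Part.some (Nat.pair (f z) k) := by
      have hz : cf.eval z = Part.some (f z) := by rw [hcf]; rfl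
      show Nat.pair <$> cf.eval z <*> (Code.const k).eval z = _
      rw [hz, Nat.Partrec.Code.eval_const]
      simp [Seq.seq]
    have h2 : cA.eval (Nat.pair (f z) k) = Part.some (f z + k) := by
      rw [hcA]
      show Part.some ((Nat.pair (f z) k).unpair.1 + (Nat.pair (f z) k).unpair.2) = _
      rw [Nat.unpair_pair]
    show ((Code.pair cf (Code.const k)).eval z).bind cA.eval = _
    rw [h1]; exact (Part.bind_some _ _).trans h2
  -- the index family of the probe machines
  set NN : ℕ → ℕ := idx (enc (emb cG)) (enc (emb cA)) (enc (emb cf)) with hNN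
  have hNk : ∀ k, NN k = enc (probe (Code.comp cA (Code.pair cf (Code.const k)))) :=
    fun k => idx_eq cA cf k
  have hNprim : Primrec NN := primrec_idx _ _ _
  have jump_spec : ∀ k, ttJump X (NN k) = X (f (NN k) + k) := by
    intro k
    have hofnat : OCode.ofNat (NN k) = probe (Code.comp cA (Code.pair cf (Code.const k))) := by
      rw [hNk k]; exact ofNat_enc _
    have hdom : ((OCode.ofNat (NN k)).eval X (NN k)).Dom ↔ X (f (NN k) + k) = true := by
      rw [hofnat]
      exact probe_spec _ (fun z => f z + k) (funext (body_eval k)) X (NN k)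
    simp only [ttJump]
    cases hp : X (f (NN k) + k)
    · rw [if_neg]
      intro hd
      have := hdom.mp hd
      rw [hp] at this
      cases this
    · rw [if_pos (hdom.mpr hp)]
  -- the Σ₂ set
  have hSig : IsSigma2 {σ : List Bool | ∃ a, ∀ b, Rrel f g NN σ a b = true} :=
    ⟨Rrel f g NN, computable_Rrel hf hg hNprim, fun σ => Iff.rfl⟩
  rcases hX _ hSig with ⟨l, hmem⟩ | ⟨l, hav⟩
  · -- meet case: the probed bit of X itself disagrees with the prediction
    obtain ⟨a, hab⟩ := hmem
    rw [← Nat.pair_unpair a] at hab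
    obtain ⟨h1, h2, h3, h4, h5⟩ := (Rrel_iff f g NN _ _ _).mp hab
    have hlen : (strPrefix X l).length = l := strPrefix_length X l
    rw [hlen] at h2 h3
    have hpoint : ∀ j, j < f (NN a.unpair.1) →
        Kap a.unpair.2 j = ttJump (fun _ => false) j := by
      intro j hj
      refine honest_eq (fun j' hj' hK => ?_) hj
      obtain ⟨t, ht⟩ := (K_iff j').mp hK
      exact h4 j' t hj' ht
    have hswap : joinL (strPrefix X l) (Kap a.unpair.2) (f (NN a.unpair.1))
        = joinL (strPrefix X l) (ttJump fun _ => false) (f (NN a.unpair.1)) :=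
      joinL_T_congr _ _ hpoint
    have hwin : (List.range (f (NN a.unpair.1))).map (ttJoin X (ttJump fun _ => false))
        = joinL (strPrefix X l) (ttJump fun _ => false) (f (NN a.unpair.1)) :=
      joinL_eq_window X _ h2
    have hgval : g (NN a.unpair.1)
        (joinL (strPrefix X l) (Kap a.unpair.2) (f (NN a.unpair.1)))
        = ttJump X (NN a.unpair.1) := by
      rw [hswap, ← hwin, ← hred (NN a.unpair.1)]
    have hbit : (strPrefix X l).getD (f (NN a.unpair.1) + a.unpair.1) false
        = X (f (NN a.unpair.1) + a.unpair.1) := strPrefix_getD X h3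
    rw [hgval, jump_spec a.unpair.1, hbit] at h5
    exact h5 rfl
  · -- avoid case: we can flip the probed bit beyond the use
    have hlp : l < f (NN (l+1)) + (l+1) := by omega
    obtain ⟨s, hs⟩ := exists_honest (f (NN (l+1)))
    set m : ℕ := f (NN (l+1)) with hm
    set p : ℕ := m + (l+1) with hp
    set A : List Bool := strPrefix X l with hA
    set B : List Bool := List.replicate (p - l) false with hB
    have hAlen : A.length = l := strPrefix_length X l
    have hABlen : (A ++ B).length = p := by
      simp [hA, hB, strPrefix_length]
      omega
    set w : Bool := g (NN (l+1)) (joinL (A ++ B ++ [false]) (ttJump fun _ => false) m)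
      with hw
    set τ : List Bool := A ++ B ++ [!w] with hτ
    have hBlen : B.length = p - l := by simp [hB]
    have hτlen : τ.length = p + 1 := by
      simp only [hτ, List.length_append, List.length_singleton]
      omega
    have hpre : strPrefix X l <+: τ :=
      ⟨B ++ [!w], by rw [hτ, List.append_assoc]⟩
    have hbit : τ.getD p false = !w := by
      rw [hτ, ← hABlen, List.getD_append_right _ _ _ _ (le_refl _)]
      simp
    have hpoint : ∀ j, j < m → Kap s j = ttJump (fun _ => false) j := by
      intro j hj
      exact honest_eq hs hj
    have hjoin : joinL τ (Kap s) m = joinL (A ++ B ++ [false]) (ttJump fun _ => false) m := by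
      rw [joinL_T_congr τ m hpoint]
      refine joinL_congr _ m (fun j hj => ?_)
      have hjp : j < (A ++ B).length := by omega
      rw [hτ, List.getD_append _ _ _ _ hjp, List.getD_append _ _ _ _ hjp]
    have hmem : τ ∈ {σ : List Bool | ∃ a, ∀ b, Rrel f g NN σ a b = true} := by
      refine ⟨Nat.pair (l+1) s, (Rrel_iff f g NN τ (l+1) s).mpr ?_⟩
      refine ⟨by omega, ?_, ?_, ?_, ?_⟩
      · rw [hτlen, ← hm]; omega
      · rw [hτlen, ← hm, ← hp]; omega
      · intro j t hj hKt
        exact hs j hj (Kap_sound hKt)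
      · rw [← hm, ← hp, hbit, hjoin, ← hw]
        cases w <;> simp
    exact hav τ hpre hmem
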